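/- Let v be a symmetric d×d real matrix with eigenvalues λ₁(v), ..., λ_d(v), and let 0 ≤ δ ≤ K. Let A be the set of symmetric d×d matrices a such that δ|λ|² ≤ ⟨aλ,λ⟩ ≤ K|λ|² for all λ ∈ ℝ^d. Then sup_{a ∈ A} trace(a v) = ∑_{i=1}^d χ(λ_i(v)), where χ(λ) = Kλ for λ ≥ 0 and χ(λ) = δλ for λ ≤ 0. -/
import Mathlib

open Matrix

private lemma chi_bound {lam q δ K : ℝ} (h1 : δ ≤ q) (h2 : q ≤ K) :
    q * lam ≤ K * max lam 0 + δ * min lam 0 := by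
  rcases le_total 0 lam with h | h
  · rw [max_eq_left h, min_eq_right h, mul_zero, add_zero]
    exact mul_le_mul_of_nonneg_right h2 h
  · rw [max_eq_right h, min_eq_left h, mul_zero, zero_add]
    exact mul_le_mul_of_nonpos_right h1 h

open Matrix in
theorem sup_trace_over_matrix_interval (d : ℕ) (v : Matrix (Fin d) (Fin d) ℝ)
    (hv : v.IsHermitian) (δ K : ℝ) (h0 : 0 ≤ δ) (hδK : δ ≤ K) :
    sSup {t : ℝ | ∃ a : Matrix (Fin d) (Fin d) ℝ, a.IsSymm ∧
        (∀ l : Fin d → ℝ,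
          δ * (l ⬝ᵥ l) ≤ l ⬝ᵥ a.mulVec l ∧ l ⬝ᵥ a.mulVec l ≤ K * (l ⬝ᵥ l)) ∧
        t = (a * v).trace}
      = ∑ i, (K * max (hv.eigenvalues i) 0 + δ * min (hv.eigenvalues i) 0) := by
  set lam : Fin d → ℝ := hv.eigenvalues with hlam
  set U : Matrix (Fin d) (Fin d) ℝ := (hv.eigenvectorUnitary : Matrix (Fin d) (Fin d) ℝ)
    with hUdef
  have hU1 : star U * U = 1 := (Unitary.mem_iff.mp hv.eigenvectorUnitary.2).1
  have hU2 : U * star U = 1 := (Unitary.mem_iff.mp hv.eigenvectorUnitary.2).2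
  have hstar : star U = Uᵀ := by
    ext i j; simp [Matrix.star_apply]
  have hspec : v = U * diagonal lam * star U := by
    have := hv.spectral_theorem
    rwa [RCLike.ofReal_real_eq_id, Function.id_comp] at this
  set Acand : (Fin d → ℝ) → Matrix (Fin d) (Fin d) ℝ :=
      fun f => U * diagonal f * star U with hA
  have hsym : ∀ f, (Acand f).IsSymm := by
    intro f
    show (U * diagonal f * star U)ᵀ = U * diagonal f * star U
    rw [hstar]
    simp [Matrix.transpose_mul, Matrix.mul_assoc]
  have hquad : ∀ (f : Fin d → ℝ), (∀ i, δ ≤ f i ∧ f i ≤ K) →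
      ∀ l : Fin d → ℝ, δ * (l ⬝ᵥ l) ≤ l ⬝ᵥ (Acand f).mulVec l ∧
        l ⬝ᵥ (Acand f).mulVec l ≤ K * (l ⬝ᵥ l) := by
    intro f hf l
    set m : Fin d → ℝ := (star U).mulVec l with hm
    have hvM : vecMul l U = m := by
      ext j
      simp [hm, vecMul, mulVec, dotProduct, Matrix.star_apply, mul_comm]
    have hq : l ⬝ᵥ (Acand f).mulVec l = ∑ j, f j * m j ^ 2 := by
      show l ⬝ᵥ (U * diagonal f * star U).mulVec l = _
      rw [← mulVec_mulVec, ← mulVec_mulVec, dotProduct_mulVec, hvM]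
      simp only [dotProduct, mulVec_diagonal]
      exact Finset.sum_congr rfl fun j _ => by ring
    have hl : l ⬝ᵥ l = ∑ j, m j ^ 2 := by
      have h2 : m ⬝ᵥ m = l ⬝ᵥ l := by
        calc m ⬝ᵥ m = (l ᵥ* U) ⬝ᵥ ((star U) *ᵥ l) := by rw [hvM, ← hm]
          _ = l ⬝ᵥ ((U * star U) *ᵥ l) := by rw [← dotProduct_mulVec, mulVec_mulVec]
          _ = l ⬝ᵥ l := by rw [hU2, one_mulVec]
      rw [← h2]
      exact Finset.sum_congr rfl fun j _ => by ring
    constructor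
    · rw [hq, hl, Finset.mul_sum]
      exact Finset.sum_le_sum fun j _ =>
        mul_le_mul_of_nonneg_right (hf j).1 (sq_nonneg _)
    · rw [hq, hl, Finset.mul_sum]
      exact Finset.sum_le_sum fun j _ =>
        mul_le_mul_of_nonneg_right (hf j).2 (sq_nonneg _)
  have htr : ∀ f : Fin d → ℝ, ((Acand f) * v).trace = ∑ i, f i * lam i := by
    intro f
    show (U * diagonal f * star U * v).trace = _
    rw [hspec]
    have h3 : U * diagonal f * star U * (U * diagonal lam * star U)
        = U * diagonal (fun i => f i * lam i) * star U := by
      simp only [Matrix.mul_assoc]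
      rw [← Matrix.mul_assoc (star U) U, hU1, one_mul,
        ← Matrix.mul_assoc (diagonal f), diagonal_mul_diagonal]
    rw [h3, trace_mul_cycle, hU1, one_mul, trace_diagonal]
  -- upper bound
  have hub : ∀ t ∈ {t : ℝ | ∃ a : Matrix (Fin d) (Fin d) ℝ, a.IsSymm ∧
        (∀ l : Fin d → ℝ,
          δ * (l ⬝ᵥ l) ≤ l ⬝ᵥ a.mulVec l ∧ l ⬝ᵥ a.mulVec l ≤ K * (l ⬝ᵥ l)) ∧
        t = (a * v).trace},
      t ≤ ∑ i, (K * max (lam i) 0 + δ * min (lam i) 0) := by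
    rintro t ⟨a, -, hb, rfl⟩
    have key : (a * v).trace = ∑ i, ((star U * a * U) i i) * lam i := by
      rw [hspec, ← Matrix.mul_assoc, ← Matrix.mul_assoc,
        trace_mul_cycle (a * U) (diagonal lam) (star U), ← Matrix.mul_assoc]
      simp only [Matrix.trace, Matrix.diag, Matrix.mul_apply, Matrix.diagonal_apply,
        mul_ite, mul_zero, Finset.sum_ite_eq', Finset.mem_univ, if_true]
      
    rw [key]
    apply Finset.sum_le_sum
    intro i _
    set u : Fin d → ℝ := fun j => U j i with hu
    have hq : (star U * a * U) i i = u ⬝ᵥ a.mulVec u := by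
      simp only [Matrix.mul_apply, mulVec, dotProduct, Finset.sum_mul,
        Matrix.star_apply, star_trivial, hu, Finset.mul_sum]
      rw [Finset.sum_comm]
      exact Finset.sum_congr rfl fun k _ => Finset.sum_congr rfl fun j _ => by ring
    have hu1 : u ⬝ᵥ u = 1 := by
      have h := congrFun (congrFun hU1 i) i
      simpa [Matrix.mul_apply, Matrix.star_apply, Matrix.one_apply, dotProduct, hu] using h
    obtain ⟨hbl, hbr⟩ := hb u
    rw [hu1, mul_one] at hbl hbr
    rw [hq]
    exact chi_bound hbl hbr
  -- the maximizer
  set f : Fin d → ℝ := fun i => if 0 ≤ lam i then K else δ with hf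
  have hfb : ∀ i, δ ≤ f i ∧ f i ≤ K := by
    intro i
    simp only [hf]
    split <;> exact ⟨by linarith, by linarith⟩
  have hmem : (∑ i, (K * max (lam i) 0 + δ * min (lam i) 0)) ∈
      {t : ℝ | ∃ a : Matrix (Fin d) (Fin d) ℝ, a.IsSymm ∧
        (∀ l : Fin d → ℝ,
          δ * (l ⬝ᵥ l) ≤ l ⬝ᵥ a.mulVec l ∧ l ⬝ᵥ a.mulVec l ≤ K * (l ⬝ᵥ l)) ∧
        t = (a * v).trace} := by
    refine ⟨Acand f, hsym f, hquad f hfb, ?_⟩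
    rw [htr f]
    refine Finset.sum_congr rfl fun i _ => ?_
    simp only [hf]
    rcases le_or_gt 0 (lam i) with h | h
    · rw [if_pos h, max_eq_left h, min_eq_right h]; ring
    · rw [if_neg (not_le.mpr h), max_eq_right h.le, min_eq_left h.le]; ring
  exact le_antisymm (csSup_le ⟨_, hmem⟩ hub) (le_csSup ⟨_, hub⟩ hmem)
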